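/- Let M be a matroid on a finite ground set E, let 𝓕 = (F_0, …, F_d) be any flag of flats of M, and let i be an index with 0 ≤ i ≤ d − 1. Then Σ_{F' flat, F_i ⋖ F' ⊆ F_{i+1}} e_{F'} = e_{F_{i+1}} + (m − 1) · e_{F_i}, where m ≥ 1 is the number of flats F' of M with F_i ⋖ F' ⊆ F_{i+1}; in particular this vector lies in the cone 𝔠_𝓕. -/

import Mathlib

open scoped BigOperators

/-- The `0-1` indicator vector `e_F ∈ ℝ^E` of a subset `F ⊆ E`. -/
noncomputable def eVec {α : Type*} (F : Set α) : α → ℝ := F.indicator 1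

/-- `F'` covers `F` in the lattice of flats of `M`: both are flats, `F ⊊ F'`,
and there is no flat strictly between them. -/
def MCov {α : Type*} (M : Matroid α) (F F' : Set α) : Prop :=
  M.IsFlat F ∧ M.IsFlat F' ∧ F ⊂ F' ∧ ¬ ∃ F'', M.IsFlat F'' ∧ F ⊂ F'' ∧ F'' ⊂ F'

/-- A flag of flats `∅ = F_0 ⊊ F_1 ⊊ ⋯ ⊊ F_d = E` of a matroid `M`. -/
def IsFlag {α : Type*} (M : Matroid α) (d : ℕ) (𝓕 : Fin (d + 1) → Set α) : Prop :=
  (∀ j, M.IsFlat (𝓕 j)) ∧ StrictMono 𝓕 ∧ 𝓕 0 = ∅ ∧ 𝓕 (Fin.last d) = M.E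

/-- The cone `𝔠_𝓕 = { Σ_j λ_j e_{F_j} : λ_j ≥ 0 for j = 1, …, d−1 }` of a flag. -/
def flagCone {α : Type*} (d : ℕ) (𝓕 : Fin (d + 1) → Set α) : Set (α → ℝ) :=
  { x | ∃ lam : Fin (d + 1) → ℝ,
      (∀ j : Fin (d + 1), (j : ℕ) ≠ 0 → (j : ℕ) ≠ d → 0 ≤ lam j) ∧
      x = ∑ j, lam j • eVec (𝓕 j) }

/-- The closure of any set is a flat. -/
lemma flat_closure_aux {α : Type*} (M : Matroid α) (X : Set α) : M.IsFlat (M.closure X) := by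
  rw [Matroid.closure_def]
  have hne : Nonempty {F // F ∈ {F | M.IsFlat F ∧ X ∩ M.E ⊆ F}} :=
    ⟨⟨M.E, M.ground_isFlat, Set.inter_subset_right⟩⟩
  rw [Set.sInter_eq_iInter]
  exact Matroid.IsFlat.iInter fun F ↦ F.2.1

/-- `cl (insert x F)` covers `F` when `F` is a flat and `x ∈ M.E \ F`. -/
lemma mcov_closure_insert {α : Type*} (M : Matroid α) {F : Set α} {x : α}
    (hF : M.IsFlat F) (hxE : x ∈ M.E) (hx : x ∉ F) :
    MCov M F (M.closure (insert x F)) := by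
  have hFE : F ⊆ M.E := hF.subset_ground
  have hins : insert x F ⊆ M.E := Set.insert_subset hxE hFE
  have hxcl : x ∈ M.closure (insert x F) := M.subset_closure _ hins (Set.mem_insert _ _)
  have hFcl : F ⊆ M.closure (insert x F) :=
    (Set.subset_insert _ _).trans (M.subset_closure _ hins)
  refine ⟨hF, flat_closure_aux M _, ⟨hFcl, fun h ↦ hx (h hxcl)⟩, ?_⟩
  rintro ⟨F'', hF''flat, hFF'', hF''cl⟩
  obtain ⟨y, hyF'', hyF⟩ := Set.exists_of_ssubset hFF''
  have hycl : y ∈ M.closure (insert x F) := hF''cl.1 hyF''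
  have hyclF : y ∉ M.closure F := by rwa [hF.closure]
  have hxmem : x ∈ M.closure (insert y F) := Matroid.mem_closure_insert hyclF hycl
  have hinsy : insert y F ⊆ F'' := Set.insert_subset hyF'' hFF''.1
  have hxF'' : x ∈ F'' := by
    have := M.closure_subset_closure hinsy
    rw [hF''flat.closure] at this
    exact this hxmem
  have : M.closure (insert x F) ⊆ F'' := by
    have := M.closure_subset_closure (Set.insert_subset hxF'' hFF''.1)
    rwa [hF''flat.closure] at this
  exact hF''cl.2 this

/-- Uniqueness: a cover of `F` containing `x ∉ F` must equal `cl (insert x F)`. -/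
lemma mcov_eq_closure_insert {α : Type*} (M : Matroid α) {F F' : Set α} {x : α}
    (h : MCov M F F') (hxF' : x ∈ F') (hxF : x ∉ F) :
    F' = M.closure (insert x F) := by
  obtain ⟨hF, hF', hss, hno⟩ := h
  have hsub : M.closure (insert x F) ⊆ F' := by
    have := M.closure_subset_closure (Set.insert_subset hxF' hss.1)
    rwa [hF'.closure] at this
  have hxE : x ∈ M.E := hF'.subset_ground hxF'
  have hcov := mcov_closure_insert M hF hxE hxF
  by_contra hne
  exact hno ⟨M.closure (insert x F), flat_closure_aux M _, hcov.2.2.1,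
    ⟨hsub, fun hc ↦ hne ((hsub.antisymm hc).symm)⟩⟩

/-- For any flag of flats `𝓕 = (F_0, …, F_d)` and any `0 ≤ i ≤ d−1`,
`Σ_{F_i ⋖ F' ⊆ F_{i+1}} e_{F'} = e_{F_{i+1}} + (m−1)·e_{F_i}` where `m ≥ 1` is the
number of such flats `F'`; in particular this vector lies in `𝔠_𝓕`. -/
theorem flag_cover_sum {α : Type*} [Fintype α] (M : Matroid α) (hE : M.E = Set.univ)
    (d : ℕ) (𝓕 : Fin (d + 1) → Set α) (h𝓕 : IsFlag M d 𝓕)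
    (i : ℕ) (hi : i + 1 ≤ d)
    (m : ℕ)
    (hm : m = Set.ncard {F' : Set α | MCov M (𝓕 ⟨i, by omega⟩) F' ∧ F' ⊆ 𝓕 ⟨i + 1, by omega⟩}) :
    1 ≤ m ∧
    (∑ᶠ F' ∈ {F' : Set α | MCov M (𝓕 ⟨i, by omega⟩) F' ∧ F' ⊆ 𝓕 ⟨i + 1, by omega⟩}, eVec F')
      = eVec (𝓕 ⟨i + 1, by omega⟩) + ((m : ℝ) - 1) • eVec (𝓕 ⟨i, by omega⟩) ∧
    (∑ᶠ F' ∈ {F' : Set α | MCov M (𝓕 ⟨i, by omega⟩) F' ∧ F' ⊆ 𝓕 ⟨i + 1, by omega⟩}, eVec F')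
      ∈ flagCone d 𝓕 := by
  classical
  obtain ⟨hflat, hmono, h0, hlast⟩ := h𝓕
  set a : Fin (d + 1) := ⟨i, by omega⟩ with ha
  set b : Fin (d + 1) := ⟨i + 1, by omega⟩ with hb
  set F : Set α := 𝓕 a with hFdef
  set G : Set α := 𝓕 b with hGdef
  have hab : a < b := by simp [ha, hb, Fin.mk_lt_mk]
  have hFG : F ⊂ G := hmono hab
  have hFflat : M.IsFlat F := hflat a
  have hGflat : M.IsFlat G := hflat b
  set S : Set (Set α) := {F' : Set α | MCov M F F' ∧ F' ⊆ G} with hSdef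
  -- every member of the cover set sits between F and G
  have hmemS : ∀ F' ∈ S, F ⊂ F' ∧ F' ⊆ G := fun F' hF' ↦ ⟨hF'.1.2.2.1, hF'.2⟩
  -- for x ∈ G \ F, cl(insert x F) is the unique member of S containing x
  have hclS : ∀ x ∈ G, x ∉ F → M.closure (insert x F) ∈ S := by
    intro x hxG hxF
    refine ⟨mcov_closure_insert M hFflat (hGflat.subset_ground hxG) hxF, ?_⟩
    have := M.closure_subset_closure (Set.insert_subset hxG hFG.1)
    rwa [hGflat.closure] at this
  have hS : S.Finite := Set.toFinite S
  set T : Finset (Set α) := hS.toFinset with hT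
  have hcoe : S = ↑T := by simp [hT]; rfl
  have hsum : (∑ᶠ F' ∈ S, eVec F') = ∑ F' ∈ T, eVec F' := by
    rw [hcoe, finsum_mem_coe_finset]
  have hmcard : m = T.card := by
    rw [hm]
    rw [hcoe, Set.ncard_coe_finset]
  -- S is nonempty
  obtain ⟨x₀, hx₀G, hx₀F⟩ := Set.exists_of_ssubset hFG
  have hSne : T.Nonempty := ⟨M.closure (insert x₀ F), by
    rw [hT, Set.Finite.mem_toFinset]; exact hclS x₀ hx₀G hx₀F⟩
  have hm1 : 1 ≤ m := by rw [hmcard]; exact Finset.card_pos.2 hSne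
  -- the main pointwise identity
  have hkey : (∑ F' ∈ T, eVec F') = eVec G + ((m : ℝ) - 1) • eVec F := by
    funext y
    have hT' : ∀ F', F' ∈ T ↔ F' ∈ S := fun F' ↦ Set.Finite.mem_toFinset hS
    simp only [Finset.sum_apply, Pi.add_apply, Pi.smul_apply, smul_eq_mul, eVec]
    have hind : ∀ (A : Set α), A.indicator (1 : α → ℝ) y = if y ∈ A then 1 else 0 := by
      intro A; by_cases h : y ∈ A <;> simp [h]
    rw [hind, hind]
    simp_rw [hind]
    rw [Finset.sum_boole]
    by_cases hyF : y ∈ F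
    · have hyG : y ∈ G := hFG.1 hyF
      have : T.filter (fun F' ↦ y ∈ F') = T := by
        refine Finset.filter_true_of_mem fun F' hF' ↦ ?_
        exact ((hmemS F' ((hT' F').1 hF')).1).1 hyF
      rw [this, if_pos hyG, if_pos hyF, ← hmcard]
      push_cast [hm1]
      ring
    · by_cases hyG : y ∈ G
      · have : T.filter (fun F' ↦ y ∈ F') = {M.closure (insert y F)} := by
          ext F'
          simp only [Finset.mem_filter, Finset.mem_singleton, hT']
          constructor
          · rintro ⟨hF'S, hyF'⟩
            exact mcov_eq_closure_insert M hF'S.1 hyF' hyF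
          · rintro rfl
            refine ⟨hclS y hyG hyF, ?_⟩
            exact M.subset_closure _ (Set.insert_subset (hGflat.subset_ground hyG)
              hFflat.subset_ground) (Set.mem_insert _ _)
        rw [this, if_pos hyG, if_neg hyF]
        simp
      · have : T.filter (fun F' ↦ y ∈ F') = ∅ := by
          refine Finset.filter_false_of_mem fun F' hF' ↦ ?_
          exact fun hc ↦ hyG ((hmemS F' ((hT' F').1 hF')).2 hc)
        rw [this, if_neg hyG, if_neg hyF]
        simp
  refine ⟨hm1, by rw [hsum]; exact hkey, ?_⟩
  -- cone membership
  refine ⟨fun j ↦ (if j = b then (1 : ℝ) else 0) + (if j = a then (m : ℝ) - 1 else 0),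
    fun j _ _ ↦ ?_, ?_⟩
  · have h1 : (0 : ℝ) ≤ if j = b then (1 : ℝ) else 0 := by positivity
    have h2 : (0 : ℝ) ≤ if j = a then (m : ℝ) - 1 else 0 := by
      split
      · have : (1 : ℝ) ≤ (m : ℝ) := by exact_mod_cast hm1
        linarith
      · exact le_rfl
    exact add_nonneg h1 h2
  · rw [hsum, hkey]
    have hne : a ≠ b := by
      simp only [ha, hb, Ne, Fin.mk.injEq]; omega
    simp_rw [add_smul, ite_smul, zero_smul, one_smul, Finset.sum_add_distrib,
      Finset.sum_ite_eq', Finset.mem_univ, if_pos]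
    rfl
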